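/- arXiv:1011.0270 — 3 statements merged into one kernel-verified Lean document; each statement's English description precedes it below -/
import Mathlib

section
/- Let α > 0, ζ, ξ, k be real constants. Define P, Q : (0,∞) → ℝ by P(t) = log(α t^k (1 + ζ² t^{−2k})) and Q(t) = ξ − ζ t^{−2k} / (α (1 + ζ² t^{−2k})). Then P and Q are twice differentiable on (0,∞) and satisfy the VTD equations: P''(t) + P'(t)/t = e^{2P(t)} (Q'(t))² and Q''(t) + Q'(t)/t = −2 P'(t) Q'(t) for all t > 0. -/
/-- The explicit functions `P(t) = log(α t^k (1 + ζ² t^{-2k}))` and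
`Q(t) = ξ - ζ t^{-2k} / (α (1 + ζ² t^{-2k}))` are twice differentiable on `(0,∞)` and
solve the VTD equations `P'' + P'/t = e^{2P} (Q')²` and `Q'' + Q'/t = -2 P' Q'`. -/
theorem vtd_explicit_solution (α ζ ξ k : ℝ) (hα : 0 < α) (P Q : ℝ → ℝ)
    (hP : ∀ t : ℝ, 0 < t →
      P t = Real.log (α * t ^ k * (1 + ζ ^ 2 * t ^ (-(2 * k)))))
    (hQ : ∀ t : ℝ, 0 < t →
      Q t = ξ - ζ * t ^ (-(2 * k)) / (α * (1 + ζ ^ 2 * t ^ (-(2 * k))))) :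
    ∀ t : ℝ, 0 < t →
      DifferentiableAt ℝ P t ∧ DifferentiableAt ℝ (deriv P) t ∧
      DifferentiableAt ℝ Q t ∧ DifferentiableAt ℝ (deriv Q) t ∧
      deriv (deriv P) t + deriv P t / t = Real.exp (2 * P t) * (deriv Q t) ^ 2 ∧
      deriv (deriv Q) t + deriv Q t / t = -2 * deriv P t * deriv Q t := by
  intro t ht
  set b : ℝ → ℝ := fun s => s ^ (-(2*k)) with hbdef
  have hbpos : ∀ s : ℝ, 0 < s → 0 < b s := fun s hs => Real.rpow_pos_of_pos hs _
  have hDpos : ∀ s : ℝ, 0 < s → 0 < 1 + ζ^2 * b s := fun s hs =>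
    add_pos_of_pos_of_nonneg one_pos (mul_nonneg (sq_nonneg ζ) (hbpos s hs).le)
  have hbder : ∀ s : ℝ, 0 < s → HasDerivAt b (-(2*k) * b s / s) s := by
    intro s hs
    have h := Real.hasDerivAt_rpow_const (x := s) (p := -(2*k)) (Or.inl hs.ne')
    convert h using 1
    show -(2*k) * s ^ (-(2*k)) / s = -(2*k) * s ^ (-(2*k) - 1)
    rw [Real.rpow_sub hs, Real.rpow_one]
    ring
  -- first derivative of P
  have hPder : ∀ s : ℝ, 0 < s →
      HasDerivAt P (k * (1 - ζ^2 * b s) / (s * (1 + ζ^2 * b s))) s := by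
    intro s hs
    have hk : HasDerivAt (fun u : ℝ => u ^ k) (k * s ^ (k - 1)) s :=
      Real.hasDerivAt_rpow_const (Or.inl hs.ne')
    have hF : HasDerivAt (fun u => α * u ^ k * (1 + ζ^2 * b u))
        (α * (k * s ^ (k - 1)) * (1 + ζ^2 * b s) + α * s ^ k * (ζ^2 * (-(2*k) * b s / s))) s :=
      (hk.const_mul α).mul (((hbder s hs).const_mul (ζ^2)).const_add 1)
    have hFpos : 0 < α * s ^ k * (1 + ζ^2 * b s) :=
      mul_pos (mul_pos hα (Real.rpow_pos_of_pos hs k)) (hDpos s hs)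
    have hlog := hF.log hFpos.ne'
    have hev : P =ᶠ[nhds s] fun u => Real.log (α * u ^ k * (1 + ζ^2 * b u)) :=
      Filter.eventuallyEq_of_mem (Ioi_mem_nhds hs) (fun u hu => hP u hu)
    have hmain := hlog.congr_of_eventuallyEq hev
    refine hmain.congr_deriv ?_
    have hsk := (Real.rpow_pos_of_pos hs k).ne'
    rw [Real.rpow_sub hs, Real.rpow_one]
    field_simp
    ring
  -- first derivative of Q
  have hQder : ∀ s : ℝ, 0 < s →
      HasDerivAt Q (2*k*ζ* b s / (s * α * (1 + ζ^2 * b s)^2)) s := by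
    intro s hs
    have hnum : HasDerivAt (fun u => ζ * b u) (ζ * (-(2*k) * b s / s)) s :=
      (hbder s hs).const_mul ζ
    have hden : HasDerivAt (fun u => α * (1 + ζ^2 * b u)) (α * (ζ^2 * (-(2*k) * b s / s))) s :=
      (((hbder s hs).const_mul (ζ^2)).const_add 1).const_mul α
    have hdne : α * (1 + ζ^2 * b s) ≠ 0 := (mul_pos hα (hDpos s hs)).ne'
    have hdiv := (hnum.div hden hdne).const_sub ξ
    have hev : Q =ᶠ[nhds s] fun u => ξ - ζ * b u / (α * (1 + ζ^2 * b u)) :=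
      Filter.eventuallyEq_of_mem (Ioi_mem_nhds hs) (fun u hu => hQ u hu)
    have hmain := hdiv.congr_of_eventuallyEq hev
    refine hmain.congr_deriv ?_
    field_simp
    ring
  have hEqP : deriv P =ᶠ[nhds t] fun s => k * (1 - ζ^2 * b s) / (s * (1 + ζ^2 * b s)) :=
    Filter.eventuallyEq_of_mem (Ioi_mem_nhds ht) (fun s hs => (hPder s hs).deriv)
  have hEqQ : deriv Q =ᶠ[nhds t] fun s => 2*k*ζ* b s / (s * α * (1 + ζ^2 * b s)^2) :=
    Filter.eventuallyEq_of_mem (Ioi_mem_nhds ht) (fun s hs => (hQder s hs).deriv)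
  -- second derivative of P
  have hnP : HasDerivAt (fun s => k * (1 - ζ^2 * b s)) (k * (-(ζ^2 * (-(2*k) * b t / t)))) t :=
    (((hbder t ht).const_mul (ζ^2)).const_sub 1).const_mul k
  have hdP : HasDerivAt (fun s => s * (1 + ζ^2 * b s))
      (1 * (1 + ζ^2 * b t) + t * (ζ^2 * (-(2*k) * b t / t))) t :=
    (hasDerivAt_id t).mul (((hbder t ht).const_mul (ζ^2)).const_add 1)
  have hP2 := hnP.div hdP (mul_pos ht (hDpos t ht)).ne'
  simp only [Pi.div_def] at hP2
  -- second derivative of Q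
  have hnQ : HasDerivAt (fun s => 2*k*ζ* b s) (2*k*ζ * (-(2*k) * b t / t)) t :=
    (hbder t ht).const_mul (2*k*ζ)
  have hDder : HasDerivAt (fun s => 1 + ζ^2 * b s) (ζ^2 * (-(2*k) * b t / t)) t :=
    ((hbder t ht).const_mul (ζ^2)).const_add 1
  have hdQ := ((hasDerivAt_id t).mul_const α).mul (hDder.pow 2)
  have hQ2 := hnQ.div hdQ
    (by exact (mul_pos (mul_pos ht hα) (pow_pos (hDpos t ht) 2)).ne')
  simp only [id_eq] at hQ2
  simp only [Pi.div_def, Pi.mul_apply, Pi.pow_apply] at hQ2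
  -- exp(2 P t)
  have hxy : (t ^ k) ^ 2 * b t = 1 := by
    show (t ^ k) ^ 2 * t ^ (-(2*k)) = 1
    rw [sq, ← Real.rpow_add ht, ← Real.rpow_add ht, show k + k + -(2*k) = 0 by ring,
      Real.rpow_zero]
  have hE : Real.exp (2 * P t) = α^2 * (1 + ζ^2 * b t)^2 / (b t) := by
    rw [hP t ht]
    have hXpos : 0 < α * t ^ k * (1 + ζ^2 * b t) :=
      mul_pos (mul_pos hα (Real.rpow_pos_of_pos ht k)) (hDpos t ht)
    rw [show (2:ℝ) * Real.log (α * t ^ k * (1 + ζ ^ 2 * t ^ (-(2 * k)))) =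
        Real.log ((α * t ^ k * (1 + ζ ^ 2 * t ^ (-(2 * k))))^2) by
      rw [Real.log_pow]; push_cast; ring]
    rw [Real.exp_log (pow_pos hXpos 2)]
    rw [eq_div_iff (hbpos t ht).ne']
    show (α * t ^ k * (1 + ζ^2 * b t))^2 * b t = α^2 * (1 + ζ^2 * b t)^2
    linear_combination α^2 * (1 + ζ^2 * b t)^2 * hxy
  refine ⟨(hPder t ht).differentiableAt,
    (hP2.congr_of_eventuallyEq hEqP).differentiableAt,
    (hQder t ht).differentiableAt,
    (hQ2.congr_of_eventuallyEq hEqQ).differentiableAt, ?_, ?_⟩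
  · rw [hEqP.deriv_eq, hP2.deriv, (hPder t ht).deriv, (hQder t ht).deriv, hE]
    have h1 := ht.ne'
    have h2 := hα.ne'
    have h3 := (hDpos t ht).ne'
    have h4 := (hbpos t ht).ne'
    field_simp
    ring
  · rw [hEqQ.deriv_eq, hQ2.deriv, (hPder t ht).deriv, (hQder t ht).deriv]
    have h1 := ht.ne'
    have h2 := hα.ne'
    have h3 := (hDpos t ht).ne'
    have h4 := (hbpos t ht).ne'
    field_simp
    ring
end

section
/- Let P, Q, Λ : (0,∞) × ℝ → ℝ be twice continuously differentiable, and suppose P and Q satisfy the Gowdy equations P_tt + P_t/t − P_xx = e^{2P}(Q_t² − Q_x²) and Q_tt + Q_t/t − Q_xx = −2(P_t Q_t − P_x Q_x) on (0,∞) × ℝ. Define the constraint quantities C₁ := −Λ_t + t P_x² + t e^{2P} Q_x² + t P_t² + t e^{2P} Q_t², C₂ := −Λ_x + 2t P_x P_t + 2t e^{2P} Q_x Q_t, and H := −Λ_tt + Λ_xx + P_x² − P_t² + e^{2P}(Q_x² − Q_t²). Then the subsidiary system ∂_t C₁ = ∂_x C₂ + H and ∂_t C₂ = ∂_x C₁ holds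 on (0,∞) × ℝ. -/
open Topology Filter Set


noncomputable section

/-- Partial derivative in the first (time) variable. -/
def pdt (f : ℝ → ℝ → ℝ) (t x : ℝ) : ℝ := deriv (fun s => f s x) t

/-- Partial derivative in the second (space) variable. -/
def pdx (f : ℝ → ℝ → ℝ) (t x : ℝ) : ℝ := deriv (fun y => f t y) x

/-- The first Gowdy constraint quantity `C₁`. -/
def gowdyC1 (P Q Λ : ℝ → ℝ → ℝ) (t x : ℝ) : ℝ :=
  -pdt Λ t x + t * (pdx P t x) ^ 2 + t * Real.exp (2 * P t x) * (pdx Q t x) ^ 2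
    + t * (pdt P t x) ^ 2 + t * Real.exp (2 * P t x) * (pdt Q t x) ^ 2

/-- The second Gowdy constraint quantity `C₂`. -/
def gowdyC2 (P Q Λ : ℝ → ℝ → ℝ) (t x : ℝ) : ℝ :=
  -pdx Λ t x + 2 * t * pdx P t x * pdt P t x
    + 2 * t * Real.exp (2 * P t x) * pdx Q t x * pdt Q t x

/-- The residual `H` of the wave equation for `Λ`. -/
def gowdyH (P Q Λ : ℝ → ℝ → ℝ) (t x : ℝ) : ℝ :=
  -pdt (pdt Λ) t x + pdx (pdx Λ) t x + (pdx P t x) ^ 2 - (pdt P t x) ^ 2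
    + Real.exp (2 * P t x) * ((pdx Q t x) ^ 2 - (pdt Q t x) ^ 2)

lemma gowdy_aux (f : ℝ → ℝ → ℝ)
    (hf : ContDiffOn ℝ 2 (Function.uncurry f) (Set.Ioi 0 ×ˢ Set.univ))
    (t x : ℝ) (ht : 0 < t) :
    HasDerivAt (fun s => f s x) (pdt f t x) t ∧
    HasDerivAt (fun y => f t y) (pdx f t x) x ∧
    HasDerivAt (fun s => pdt f s x) (pdt (pdt f) t x) t ∧
    HasDerivAt (fun s => pdx f s x) (pdt (pdx f) t x) t ∧
    HasDerivAt (fun y => pdt f t y) (pdx (pdt f) t x) x ∧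
    HasDerivAt (fun y => pdx f t y) (pdx (pdx f) t x) x ∧
    pdx (pdt f) t x = pdt (pdx f) t x := by
  set U : Set (ℝ × ℝ) := Set.Ioi 0 ×ˢ Set.univ with hUdef
  have hU : IsOpen U := isOpen_Ioi.prod isOpen_univ
  set F := Function.uncurry f with hF
  -- membership helper
  have hmem : ∀ s : ℝ, 0 < s → ∀ y : ℝ, ((s, y) : ℝ × ℝ) ∈ U := fun s hs y => ⟨hs, trivial⟩
  have hp : ((t, x) : ℝ × ℝ) ∈ U := hmem t ht x
  have hUp : U ∈ 𝓝 ((t, x) : ℝ × ℝ) := hU.mem_nhds hp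
  -- F differentiable at every point of U
  have hFd : ∀ q ∈ U, DifferentiableAt ℝ F q := fun q hq =>
    (hf.differentiableOn (by norm_num)).differentiableAt (hU.mem_nhds hq)
  -- first partials as fderiv
  have lineT : ∀ (s y : ℝ), HasDerivAt (fun u : ℝ => ((u, y) : ℝ × ℝ)) (1, 0) s :=
    fun s y => (hasDerivAt_id s).prodMk (hasDerivAt_const s y)
  have lineX : ∀ (s y : ℝ), HasDerivAt (fun u : ℝ => ((s, u) : ℝ × ℝ)) (0, 1) y :=
    fun s y => (hasDerivAt_const y s).prodMk (hasDerivAt_id y)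
  have h1' : ∀ s > 0, ∀ y, HasDerivAt (fun u => f u y) (fderiv ℝ F (s, y) (1, 0)) s := by
    intro s hs y
    exact ((hFd _ (hmem s hs y)).hasFDerivAt).comp_hasDerivAt s (lineT s y)
  have h2' : ∀ s > 0, ∀ y, HasDerivAt (fun u => f s u) (fderiv ℝ F (s, y) (0, 1)) y := by
    intro s hs y
    exact ((hFd _ (hmem s hs y)).hasFDerivAt).comp_hasDerivAt y (lineX s y)
  have e1 : ∀ s > 0, ∀ y, pdt f s y = fderiv ℝ F (s, y) (1, 0) := fun s hs y => (h1' s hs y).deriv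
  have e2 : ∀ s > 0, ∀ y, pdx f s y = fderiv ℝ F (s, y) (0, 1) := fun s hs y => (h2' s hs y).deriv
  have h1 : HasDerivAt (fun s => f s x) (pdt f t x) t := (e1 t ht x) ▸ h1' t ht x
  have h2 : HasDerivAt (fun y => f t y) (pdx f t x) x := (e2 t ht x) ▸ h2' t ht x
  -- fderiv F is C¹ on U
  have hF1 : ContDiffOn ℝ 1 (fderiv ℝ F) U := hf.fderiv_of_isOpen hU (by norm_num)
  have hF1d : DifferentiableAt ℝ (fderiv ℝ F) (t, x) :=
    (hF1.differentiableOn one_ne_zero).differentiableAt hUp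
  set A1 : ((ℝ × ℝ) →L[ℝ] ℝ) →L[ℝ] ℝ := ContinuousLinearMap.apply ℝ ℝ ((1 : ℝ), (0 : ℝ))
  set A2 : ((ℝ × ℝ) →L[ℝ] ℝ) →L[ℝ] ℝ := ContinuousLinearMap.apply ℝ ℝ ((0 : ℝ), (1 : ℝ))
  set G1 : ℝ × ℝ → ℝ := fun q => fderiv ℝ F q (1, 0) with hG1def
  set G2 : ℝ × ℝ → ℝ := fun q => fderiv ℝ F q (0, 1) with hG2def
  have hG1 : HasFDerivAt G1 (A1.comp (fderiv ℝ (fderiv ℝ F) (t, x))) (t, x) :=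
    A1.hasFDerivAt.comp (t, x) hF1d.hasFDerivAt
  have hG2 : HasFDerivAt G2 (A2.comp (fderiv ℝ (fderiv ℝ F) (t, x))) (t, x) :=
    A2.hasFDerivAt.comp (t, x) hF1d.hasFDerivAt
  -- eventual equalities
  have hevT1 : (fun s => pdt f s x) =ᶠ[𝓝 t] fun s => G1 (s, x) := by
    filter_upwards [Ioi_mem_nhds ht] with s hs using e1 s hs x
  have hevT2 : (fun s => pdx f s x) =ᶠ[𝓝 t] fun s => G2 (s, x) := by
    filter_upwards [Ioi_mem_nhds ht] with s hs using e2 s hs x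
  have hevX1 : (fun y => pdt f t y) =ᶠ[𝓝 x] fun y => G1 (t, y) := by
    filter_upwards [Filter.Eventually.of_forall fun y => trivial] with y _ using e1 t ht y
  have hevX2 : (fun y => pdx f t y) =ᶠ[𝓝 x] fun y => G2 (t, y) := by
    filter_upwards [Filter.Eventually.of_forall fun y => trivial] with y _ using e2 t ht y
  -- second partial HasDerivAt facts
  have H11 : HasDerivAt (fun s => G1 (s, x)) (fderiv ℝ (fderiv ℝ F) (t, x) (1, 0) (1, 0)) t :=
    by have := hG1.comp_hasDerivAt t (lineT t x); exact this
  have H21 : HasDerivAt (fun s => G2 (s, x)) (fderiv ℝ (fderiv ℝ F) (t, x) (1, 0) (0, 1)) t :=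
    by have := hG2.comp_hasDerivAt t (lineT t x); exact this
  have H12 : HasDerivAt (fun y => G1 (t, y)) (fderiv ℝ (fderiv ℝ F) (t, x) (0, 1) (1, 0)) x :=
    hG1.comp_hasDerivAt x (lineX t x)
  have H22 : HasDerivAt (fun y => G2 (t, y)) (fderiv ℝ (fderiv ℝ F) (t, x) (0, 1) (0, 1)) x :=
    hG2.comp_hasDerivAt x (lineX t x)
  have K11 := H11.congr_of_eventuallyEq hevT1
  have K21 := H21.congr_of_eventuallyEq hevT2
  have K12 := H12.congr_of_eventuallyEq hevX1
  have K22 := H22.congr_of_eventuallyEq hevX2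
  have hsymm : fderiv ℝ (fderiv ℝ F) (t, x) (0, 1) (1, 0)
      = fderiv ℝ (fderiv ℝ F) (t, x) (1, 0) (0, 1) :=
    ((hf.contDiffAt hUp).isSymmSndFDerivAt (by simp [minSmoothness_of_isRCLikeNormedField])) (0, 1) (1, 0)
  have eK11 : pdt (pdt f) t x = _ := K11.deriv
  have eK21 : pdt (pdx f) t x = _ := K21.deriv
  have eK12 : pdx (pdt f) t x = _ := K12.deriv
  have eK22 : pdx (pdx f) t x = _ := K22.deriv
  exact ⟨h1, h2, eK11 ▸ K11, eK21 ▸ K21, eK12 ▸ K12, eK22 ▸ K22,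
    by rw [eK12, eK21, hsymm]⟩

/-- If `P, Q, Λ` are `C²` on `(0,∞) × ℝ` and `P, Q` satisfy the Gowdy
equations, then the constraint quantities `C₁, C₂` and wave residual `H` satisfy the
subsidiary system `∂_t C₁ = ∂ₓ C₂ + H`, `∂_t C₂ = ∂ₓ C₁`. -/
theorem gowdy_subsidiary_system (P Q Λ : ℝ → ℝ → ℝ)
    (hPreg : ContDiffOn ℝ 2 (Function.uncurry P) (Set.Ioi 0 ×ˢ Set.univ))
    (hQreg : ContDiffOn ℝ 2 (Function.uncurry Q) (Set.Ioi 0 ×ˢ Set.univ))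
    (hΛreg : ContDiffOn ℝ 2 (Function.uncurry Λ) (Set.Ioi 0 ×ˢ Set.univ))
    (hGowdyP : ∀ t : ℝ, 0 < t → ∀ x : ℝ,
      pdt (pdt P) t x + pdt P t x / t - pdx (pdx P) t x
        = Real.exp (2 * P t x) * ((pdt Q t x) ^ 2 - (pdx Q t x) ^ 2))
    (hGowdyQ : ∀ t : ℝ, 0 < t → ∀ x : ℝ,
      pdt (pdt Q) t x + pdt Q t x / t - pdx (pdx Q) t x
        = -2 * (pdt P t x * pdt Q t x - pdx P t x * pdx Q t x)) :
    ∀ t : ℝ, 0 < t → ∀ x : ℝ,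
      pdt (gowdyC1 P Q Λ) t x = pdx (gowdyC2 P Q Λ) t x + gowdyH P Q Λ t x ∧
      pdt (gowdyC2 P Q Λ) t x = pdx (gowdyC1 P Q Λ) t x := by
  intro t ht x
  obtain ⟨hP1, hP2, hPtt, hPtx, hPxt, hPxx, hPs⟩ := gowdy_aux P hPreg t x ht
  obtain ⟨hQ1, hQ2, hQtt, hQtx, hQxt, hQxx, hQs⟩ := gowdy_aux Q hQreg t x ht
  obtain ⟨hΛ1, hΛ2, hΛtt, hΛtx, hΛxt, hΛxx, hΛs⟩ := gowdy_aux Λ hΛreg t x ht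
  have ht' : t ≠ 0 := ne_of_gt ht
  -- rescaled Gowdy equations
  have EP : t * pdt (pdt P) t x + pdt P t x - t * pdx (pdx P) t x
      = t * (Real.exp (2 * P t x) * ((pdt Q t x) ^ 2 - (pdx Q t x) ^ 2)) := by
    have h := hGowdyP t ht x
    field_simp at h
    linarith
  have EQ : t * pdt (pdt Q) t x + pdt Q t x - t * pdx (pdx Q) t x
      = t * (-2 * (pdt P t x * pdt Q t x - pdx P t x * pdx Q t x)) := by
    have h := hGowdyQ t ht x
    field_simp at h
    linarith
  -- exponential factors
  have hEt : HasDerivAt (fun s => Real.exp (2 * P s x))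
      (Real.exp (2 * P t x) * (2 * pdt P t x)) t := (hP1.const_mul 2).exp
  have hEx : HasDerivAt (fun y => Real.exp (2 * P t y))
      (Real.exp (2 * P t x) * (2 * pdx P t x)) x := (hP2.const_mul 2).exp
  -- t-derivative of C1
  have hC1t :=
    (HasDerivAt.deriv (f := fun s => gowdyC1 P Q Λ s x)
      (((((hΛtt.neg.add ((hasDerivAt_id t).mul (hPtx.pow 2))).add
        (((hasDerivAt_id t).mul hEt).mul (hQtx.pow 2))).add
        ((hasDerivAt_id t).mul (hPtt.pow 2))).add
        (((hasDerivAt_id t).mul hEt).mul (hQtt.pow 2)))))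
  have hC1t' : pdt (gowdyC1 P Q Λ) t x = _ := hC1t
  -- x-derivative of C2
  have hC2x :=
    (HasDerivAt.deriv (f := fun y => gowdyC2 P Q Λ t y)
      ((hΛxx.neg.add (((hPxx.const_mul (2 * t)).mul hPxt))).add
        ((((hEx.const_mul (2 * t)).mul hQxx).mul hQxt))))
  have hC2x' : pdx (gowdyC2 P Q Λ) t x = _ := hC2x
  -- t-derivative of C2
  have hC2t :=
    (HasDerivAt.deriv (f := fun s => gowdyC2 P Q Λ s x)
      ((hΛtx.neg.add (((((hasDerivAt_id t).const_mul 2).mul hPtx).mul hPtt))).add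
        (((((hasDerivAt_id t).const_mul 2).mul hEt).mul hQtx).mul hQtt)))
  have hC2t' : pdt (gowdyC2 P Q Λ) t x = _ := hC2t
  -- x-derivative of C1
  have hC1x :=
    (HasDerivAt.deriv (f := fun y => gowdyC1 P Q Λ t y)
      (((((hΛxt.neg.add ((hPxx.pow 2).const_mul t)).add
        ((hEx.const_mul t).mul (hQxx.pow 2))).add
        ((hPxt.pow 2).const_mul t)).add
        ((hEx.const_mul t).mul (hQxt.pow 2)))))
  have hC1x' : pdx (gowdyC1 P Q Λ) t x = _ := hC1x
  constructor
  · rw [hC1t', hC2x']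
    simp only [gowdyH]
    rw [hPs, hQs]
    simp only [id_eq, pow_one, Nat.cast_ofNat, Pi.pow_apply, Pi.mul_apply]
    linear_combination 2 * pdt P t x * EP + 2 * Real.exp (2 * P t x) * pdt Q t x * EQ
  · rw [hC2t', hC1x']
    rw [hPs, hQs, hΛs]
    simp only [id_eq, pow_one, Nat.cast_ofNat, Pi.pow_apply, Pi.mul_apply]
    linear_combination 2 * pdx P t x * EP + 2 * Real.exp (2 * P t x) * pdx Q t x * EQ
end
end

section
/- Let C₁, C₂, H : (0,∞) × ℝ → ℝ be continuously differentiable functions satisfying ∂_t C₁ = ∂_x C₂ + H and ∂_t C₂ = ∂_x C₁ on (0,∞) × ℝ. If C₁(t,x) = 0 for all (t,x) ∈ (0,∞) × ℝ, and C₂(t₀,x) = 0 for all x ∈ ℝ for some t₀ > 0, then C₂(t,x) = 0 and H(t,x) = 0 for all (t,x) ∈ (0,∞) × ℝ. -/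
noncomputable section

/-- If `C₁, C₂, H` are `C¹` on `(0,∞) × ℝ` and satisfy the subsidiary system
`∂_t C₁ = ∂ₓ C₂ + H`, `∂_t C₂ = ∂ₓ C₁` there, and if `C₁ ≡ 0` on `(0,∞) × ℝ` while
`C₂(t₀,·) ≡ 0` for some `t₀ > 0`, then `C₂ ≡ 0` and `H ≡ 0` on `(0,∞) × ℝ`. -/
theorem constraint_propagation (C₁ C₂ H : ℝ → ℝ → ℝ)
    (hC₁reg : ContDiffOn ℝ 1 (Function.uncurry C₁) (Set.Ioi 0 ×ˢ Set.univ))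
    (hC₂reg : ContDiffOn ℝ 1 (Function.uncurry C₂) (Set.Ioi 0 ×ˢ Set.univ))
    (hHreg : ContDiffOn ℝ 1 (Function.uncurry H) (Set.Ioi 0 ×ˢ Set.univ))
    (hsub₁ : ∀ t : ℝ, 0 < t → ∀ x : ℝ, pdt C₁ t x = pdx C₂ t x + H t x)
    (hsub₂ : ∀ t : ℝ, 0 < t → ∀ x : ℝ, pdt C₂ t x = pdx C₁ t x)
    (hC₁zero : ∀ t : ℝ, 0 < t → ∀ x : ℝ, C₁ t x = 0)
    (t₀ : ℝ) (ht₀ : 0 < t₀) (hC₂init : ∀ x : ℝ, C₂ t₀ x = 0) :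
    ∀ t : ℝ, 0 < t → ∀ x : ℝ, C₂ t x = 0 ∧ H t x = 0 := by
  have hopen : IsOpen (Set.Ioi (0:ℝ) ×ˢ (Set.univ : Set ℝ)) :=
    isOpen_Ioi.prod isOpen_univ
  -- ∂ₓ C₁ = 0 on (0,∞)
  have hpdxC₁ : ∀ t : ℝ, 0 < t → ∀ x : ℝ, pdx C₁ t x = 0 := by
    intro t ht x
    have : (fun y => C₁ t y) = fun _ => (0:ℝ) := funext fun y => hC₁zero t ht y
    simp [pdx, this]
  -- ∂ₜ C₁ = 0 on (0,∞)
  have hpdtC₁ : ∀ t : ℝ, 0 < t → ∀ x : ℝ, pdt C₁ t x = 0 := by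
    intro t ht x
    have hev : (fun s => C₁ s x) =ᶠ[nhds t] fun _ => (0:ℝ) := by
      filter_upwards [isOpen_Ioi.mem_nhds ht] with s hs using hC₁zero s hs x
    rw [pdt, hev.deriv_eq, deriv_const]
  -- For each x, s ↦ C₂ s x has derivative 0 on (0,∞)
  have hderiv : ∀ x : ℝ, ∀ s ∈ Set.Ioi (0:ℝ), HasDerivAt (fun s => C₂ s x) 0 s := by
    intro x s hs
    have hmem : (s, x) ∈ Set.Ioi (0:ℝ) ×ˢ (Set.univ : Set ℝ) := ⟨hs, trivial⟩
    have hdiff : DifferentiableAt ℝ (Function.uncurry C₂) (s, x) :=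
      (hC₂reg.differentiableOn one_ne_zero).differentiableAt (hopen.mem_nhds hmem)
    have hline : DifferentiableAt ℝ (fun s : ℝ => ((s, x) : ℝ × ℝ)) s :=
      (differentiableAt_id.prodMk (differentiableAt_const x))
    have hg : DifferentiableAt ℝ (fun s => C₂ s x) s := by
      have := hdiff.comp s hline
      exact this
    have h0 : deriv (fun s => C₂ s x) s = 0 := by
      have := hsub₂ s hs x
      rw [hpdxC₁ s hs x] at this
      exact this
    simpa [h0] using hg.hasDerivAt
  -- C₂ ≡ 0 on (0,∞)
  have hC₂zero : ∀ t : ℝ, 0 < t → ∀ x : ℝ, C₂ t x = 0 := by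
    intro t ht x
    have key : ‖C₂ t x - C₂ t₀ x‖ ≤ 0 * ‖t - t₀‖ := by
      refine (convex_Ioi (0:ℝ)).norm_image_sub_le_of_norm_hasDerivWithin_le
        (f' := fun _ => (0:ℝ)) (fun s hs => (hderiv x s hs).hasDerivWithinAt)
        (fun s _ => by simp) ht₀ ht
    rw [hC₂init x] at key
    simpa using key
  intro t ht x
  refine ⟨hC₂zero t ht x, ?_⟩
  have hpdxC₂ : pdx C₂ t x = 0 := by
    have : (fun y => C₂ t y) = fun _ => (0:ℝ) := funext fun y => hC₂zero t ht y
    simp [pdx, this]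
  have := hsub₁ t ht x
  rw [hpdtC₁ t ht x, hpdxC₂] at this
  linarith
end
end
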